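/- Let K ≥ 1, let a ∈ ℝ with |a| < 1, let v > 0, and set σ² = v/(1 − a²). Let s ∈ (0, σ²), define m by 1/m = K/s − (K−1)/σ², and let d satisfy m < d < σ². Define d* by 1/d* = (K−1)/(K·σ²) + 1/(K·d), and define f(x) = (1/2)·log( ((a²x + v − s)/(x − s)) · (x/(a²x + v)) ) for x ∈ (s, ∞). Then: (i) s < d* < σ² and 1/d* = 1/s + (1/K)(1/d − 1/m); and (ii) the minimum of Σ_{k=1}^K f(d_k) over all (d_1, …, d_K) satisfying s ≤ d_k ≤ σ² for every k and 1/d ≤ 1/m − Σ_{k=1}^K (1/s − 1/d_k) is attained at d_1 = ⋯ = d_K = d* and equals K·f(d*). -/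

import Mathlib

/-- The per-observer rate term
`f x = (1/2) * log (((a² x + v - s)/(x - s)) * (x/(a² x + v)))` of the causal Gaussian
CEO problem, as an extended-real-valued function: for `x ≤ s` the term
`(a² x + v - s)/(x - s)` blows up (division by `0⁺` at `x = s`), and by the usual
continuity convention the value there is `+∞`. -/
noncomputable def ceoRateTerm (a v s x : ℝ) : EReal :=
  if s < x then
    (((1 / 2) * Real.log (((a ^ 2 * x + v - s) / (x - s)) * (x / (a ^ 2 * x + v)))) : ℝ)
  else ⊤


open Real Set

lemma coe_sum' {ι : Type*} (s : Finset ι) (f : ι → ℝ) :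
    ((∑ i ∈ s, f i : ℝ) : EReal) = ∑ i ∈ s, (f i : EReal) :=
  map_sum (⟨⟨Real.toEReal, EReal.coe_zero⟩, EReal.coe_add⟩ : ℝ →+ EReal) f s

noncomputable def gfun (a v s y : ℝ) : ℝ :=
  (1/2) * (Real.log (a^2 + (v - s)*y) - Real.log (1 - s*y) - Real.log (a^2 + v*y))

noncomputable def gfun1 (a v s y : ℝ) : ℝ :=
  (1/2) * ((v-s)/(a^2+(v-s)*y) + s/(1-s*y) - v/(a^2+v*y))

lemma gfun_hasDerivAt {a v s y : ℝ} (hq : a^2 + (v-s)*y ≠ 0) (ht : 1 - s*y ≠ 0)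
    (hp : a^2 + v*y ≠ 0) : HasDerivAt (gfun a v s) (gfun1 a v s y) y := by
  have h1 : HasDerivAt (fun y : ℝ => a^2 + (v-s)*y) (v-s) y := by
    simpa using ((hasDerivAt_id y).const_mul (v-s)).const_add (a^2)
  have h2 : HasDerivAt (fun y : ℝ => 1 - s*y) (-s) y := by
    have := ((hasDerivAt_id y).const_mul s).const_sub 1
    simp only [id_eq, mul_one] at this
    exact this
  have h3 : HasDerivAt (fun y : ℝ => a^2 + v*y) v y := by
    simpa using ((hasDerivAt_id y).const_mul v).const_add (a^2)
  have := (((h1.log hq).sub (h2.log ht)).sub (h3.log hp)).const_mul (1/2 : ℝ)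
  exact this.congr_deriv (by unfold gfun1; ring)

lemma gfun1_hasDerivAt {a v s y : ℝ} (hq : a^2 + (v-s)*y ≠ 0) (ht : 1 - s*y ≠ 0)
    (hp : a^2 + v*y ≠ 0) :
    HasDerivAt (gfun1 a v s)
      ((1/2) * (s^2/(1-s*y)^2 + v^2/(a^2+v*y)^2 - (v-s)^2/(a^2+(v-s)*y)^2)) y := by
  have h1 : HasDerivAt (fun y : ℝ => a^2 + (v-s)*y) (v-s) y := by
    simpa using ((hasDerivAt_id y).const_mul (v-s)).const_add (a^2)
  have h2 : HasDerivAt (fun y : ℝ => 1 - s*y) (-s) y := by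
    have := ((hasDerivAt_id y).const_mul s).const_sub 1
    simp only [id_eq, mul_one] at this
    exact this
  have h3 : HasDerivAt (fun y : ℝ => a^2 + v*y) v y := by
    simpa using ((hasDerivAt_id y).const_mul v).const_add (a^2)
  have d1 := ((hasDerivAt_const y (v-s)).div h1 hq)
  have d2 := ((hasDerivAt_const y s).div h2 ht)
  have d3 := ((hasDerivAt_const y v).div h3 hp)
  have := ((d1.add d2).sub d3).const_mul (1/2 : ℝ)
  exact this.congr_deriv (by field_simp; ring)


lemma ico_facts {a v s y : ℝ} (hv : 0 < v) (hs0 : 0 < s)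
    (hy : y ∈ Ico ((1-a^2)/v) (1/s)) :
    0 < 1 - s*y ∧ 1 ≤ a^2 + v*y ∧ 1 - s*y ≤ a^2 + (v-s)*y := by
  have h1 : y * s < 1 := (lt_div_iff₀ hs0).mp hy.2
  have h2 : 1 - a^2 ≤ y * v := (div_le_iff₀ hv).mp hy.1
  have e1 : y * s = s * y := mul_comm _ _
  have e2 : y * v = v * y := mul_comm _ _
  refine ⟨by linarith, by linarith, by linarith⟩

lemma gfun_convexOn (a v s : ℝ) (hv : 0 < v) (hA : a^2 < 1) (hs0 : 0 < s)
    (hsv : s*(1-a^2) < v) :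
    ConvexOn ℝ (Ico ((1-a^2)/v) (1/s)) (gfun a v s) := by
  have hA0 : 0 ≤ a^2 := sq_nonneg a
  have key : ∀ y ∈ Ico ((1-a^2)/v) (1/s),
      (a^2 + (v-s)*y ≠ 0) ∧ (1 - s*y ≠ 0) ∧ (a^2 + v*y ≠ 0) := by
    intro y hy
    obtain ⟨ht, hp, hqt⟩ := ico_facts hv hs0 hy
    exact ⟨by nlinarith, by linarith, by nlinarith⟩
  have hint : interior (Ico ((1-a^2)/v) (1/s)) ⊆ Ico ((1-a^2)/v) (1/s) :=
    interior_subset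
  refine convexOn_of_hasDerivWithinAt2_nonneg (convex_Ico _ _) ?_
    (f' := gfun1 a v s)
    (f'' := fun y => (1/2) * (s^2/(1-s*y)^2 + v^2/(a^2+v*y)^2 - (v-s)^2/(a^2+(v-s)*y)^2))
    ?_ ?_ ?_
  · intro y hy
    obtain ⟨hq, ht, hp⟩ := key y hy
    exact (gfun_hasDerivAt hq ht hp).continuousAt.continuousWithinAt
  · intro y hy
    obtain ⟨hq, ht, hp⟩ := key y (hint hy)
    exact (gfun_hasDerivAt hq ht hp).hasDerivWithinAt
  · intro y hy
    obtain ⟨hq, ht, hp⟩ := key y (hint hy)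
    exact (gfun1_hasDerivAt hq ht hp).hasDerivWithinAt
  · intro y hy
    obtain ⟨ht, hp, hqt⟩ := ico_facts hv hs0 (hint hy)
    set t := 1 - s*y with htdef
    set p := a^2 + v*y with hpdef
    set q := a^2 + (v-s)*y with hqdef
    have hq0 : 0 < q := lt_of_lt_of_le ht hqt
    have hp0 : (0:ℝ) < p := lt_of_lt_of_le one_pos hp
    have hnum : 0 ≤ s^2*p^2*q^2 + v^2*t^2*q^2 - (v-s)^2*t^2*p^2 := by
      have e1 : s^2*p^2*q^2 + v^2*t^2*q^2 - (v-s)^2*t^2*p^2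
          = s^2*((p*q)^2 - t^2) + 2*s*a^2*v*q*t^2 + s^2*t^2*(1 - (a^2)^2) := by
        rw [htdef, hpdef, hqdef]; ring
      have h2 : t ≤ p*q := le_trans hqt (by nlinarith)
      have h3 : t^2 ≤ (p*q)^2 := by nlinarith
      have h4 : 0 ≤ 2*s*a^2*v*q*t^2 := by positivity
      have h5 : 0 ≤ s^2*t^2*(1 - (a^2)^2) := by
        have h6 : (a^2)^2 ≤ 1 := by nlinarith [sq_nonneg a]
        have h7 : (0:ℝ) ≤ s^2*t^2 := by positivity
        nlinarith
      nlinarith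
    have e2 : s^2/t^2 + v^2/p^2 - (v-s)^2/q^2
        = (s^2*p^2*q^2 + v^2*t^2*q^2 - (v-s)^2*t^2*p^2)/(t^2*p^2*q^2) := by
      field_simp
    have : 0 ≤ s^2/t^2 + v^2/p^2 - (v-s)^2/q^2 := by
      rw [e2]
      exact div_nonneg hnum (by positivity)
    linarith

lemma tangent_line {S : Set ℝ} {g : ℝ → ℝ} {y₀ c : ℝ} (hconv : ConvexOn ℝ S g)
    (hy₀ : y₀ ∈ S) (hder : HasDerivAt g c y₀) {y : ℝ} (hy : y ∈ S) :
    g y₀ + c * (y - y₀) ≤ g y := by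
  rcases lt_trichotomy y y₀ with h | h | h
  · have := hconv.slope_le_of_hasDerivAt hy hy₀ h hder
    rw [slope_def_field] at this
    have h2 : (g y₀ - g y) ≤ c * (y₀ - y) := by
      rw [div_le_iff₀ (by linarith)] at this
      linarith
    nlinarith
  · subst h; simp
  · have := hconv.le_slope_of_hasDerivAt hy₀ hy h hder
    rw [slope_def_field] at this
    rw [le_div_iff₀ (by linarith)] at this
    nlinarith

lemma gfun1_nonneg {a v s y : ℝ} (hv : 0 < v) (hs0 : 0 < s) (hA : a^2 < 1)
    (hy : y ∈ Ico ((1-a^2)/v) (1/s)) : 0 ≤ gfun1 a v s y := by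
  obtain ⟨ht, hp, hqt⟩ := ico_facts hv hs0 hy
  have hq0 : 0 < a^2 + (v-s)*y := lt_of_lt_of_le ht hqt
  have hp0 : (0:ℝ) < a^2 + v*y := lt_of_lt_of_le one_pos hp
  have e : (v-s)/(a^2+(v-s)*y) + s/(1-s*y) - v/(a^2+v*y)
      = s*((a^2+v*y)*(a^2+(v-s)*y) - a^2*(1-s*y)) / ((1-s*y)*(a^2+v*y)*(a^2+(v-s)*y)) := by
    field_simp
    ring
  have hnum : 0 ≤ (a^2+v*y)*(a^2+(v-s)*y) - a^2*(1-s*y) := by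
    have h1 : (1-s*y) ≤ (a^2+v*y)*(a^2+(v-s)*y) := by nlinarith
    nlinarith [sq_nonneg a]
  unfold gfun1
  rw [e]
  positivity

lemma F_eq_gfun {a v s x : ℝ} (hv : 0 < v) (hs0 : 0 < s) (hx : s < x)
    (hq : 0 < a^2*x + v - s) :
    (1/2) * Real.log (((a^2*x + v - s)/(x - s)) * (x/(a^2*x + v))) = gfun a v s (1/x) := by
  have hx0 : 0 < x := hs0.trans hx
  have hp : 0 < a^2*x + v := by positivity
  have ht : 0 < x - s := by linarith
  have hq' : a^2 + (v-s)*(1/x) = (a^2*x + v - s)/x := by field_simp; ring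
  have ht' : 1 - s*(1/x) = (x-s)/x := by field_simp
  have hp' : a^2 + v*(1/x) = (a^2*x + v)/x := by field_simp
  unfold gfun
  rw [hq', ht', hp']
  rw [Real.log_div hq.ne' hx0.ne', Real.log_div ht.ne' hx0.ne', Real.log_div hp.ne' hx0.ne',
    Real.log_mul (div_ne_zero hq.ne' ht.ne') (div_ne_zero hx0.ne' hp.ne'),
    Real.log_div hq.ne' ht.ne', Real.log_div hx0.ne' hp.ne']
  ring

set_option maxHeartbeats 1600000 in
/-- Symmetric-channels causal Gaussian CEO sum-rate minimization.
Let `K ≥ 1`, `|a| < 1`, `v > 0`, `σ² = v/(1-a²)`, `s ∈ (0, σ²)`,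
`1/m = K/s - (K-1)/σ²`, and `m < d < σ²`.  Define `d*` by
`1/d* = (K-1)/(K σ²) + 1/(K d)`.  Then (i) `s < d* < σ²` and
`1/d* = 1/s + (1/K)(1/d - 1/m)`; moreover the constant allocation `d₁ = ⋯ = d_K = d*`
is feasible, and (ii) the minimum of `∑ₖ f (d k)` over all `(d₁, …, d_K)` with
`s ≤ d k ≤ σ²` and `1/d ≤ 1/m - ∑ₖ (1/s - 1/(d k))` is attained at
`d₁ = ⋯ = d_K = d*` and equals `K · f d*`. -/
theorem stmt6 (K : ℕ) (hK : 1 ≤ K) (a v : ℝ) (ha : |a| < 1) (hv : 0 < v)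
    (σ2 : ℝ) (hσ2 : σ2 = v / (1 - a ^ 2))
    (s : ℝ) (hs0 : 0 < s) (hsσ : s < σ2)
    (m : ℝ) (hm : 1 / m = (K : ℝ) / s - ((K : ℝ) - 1) / σ2)
    (d : ℝ) (hmd : m < d) (hdσ : d < σ2)
    (dstar : ℝ)
    (hdstar : 1 / dstar = ((K : ℝ) - 1) / ((K : ℝ) * σ2) + 1 / ((K : ℝ) * d)) :
    (s < dstar ∧ dstar < σ2 ∧
      1 / dstar = 1 / s + (1 / (K : ℝ)) * (1 / d - 1 / m)) ∧
    (s ≤ dstar ∧ dstar ≤ σ2 ∧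
      1 / d ≤ 1 / m - ∑ _k : Fin K, (1 / s - 1 / dstar)) ∧
    IsLeast {r : EReal | ∃ dk : Fin K → ℝ,
        (∀ k, s ≤ dk k ∧ dk k ≤ σ2) ∧
        1 / d ≤ 1 / m - ∑ k, (1 / s - 1 / dk k) ∧
        r = ∑ k, ceoRateTerm a v s (dk k)}
      ((K : EReal) * ceoRateTerm a v s dstar) := by
  have hA : a^2 < 1 := by nlinarith [sq_abs a, abs_nonneg a]
  have h1A : 0 < 1 - a^2 := by linarith
  have hσpos : 0 < σ2 := hσ2 ▸ div_pos hv h1A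
  have hK1 : (1:ℝ) ≤ (K:ℝ) := by exact_mod_cast hK
  have hKpos : (0:ℝ) < K := by linarith
  have hKne : (K:ℝ) ≠ 0 := ne_of_gt hKpos
  have hsv : s*(1-a^2) < v := by
    rw [hσ2] at hsσ; exact (lt_div_iff₀ h1A).mp hsσ
  have hs_inv : 1/σ2 < 1/s := one_div_lt_one_div_of_lt hs0 hsσ
  have hminv : 0 < 1/m := by
    rw [hm]
    have e1 : (K:ℝ)/s = K*(1/s) := by ring
    have e2 : ((K:ℝ)-1)/σ2 = ((K:ℝ)-1)*(1/σ2) := by ring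
    rw [e1, e2]
    have hss : 0 < 1/s := by positivity
    nlinarith [mul_le_mul_of_nonneg_left hs_inv.le (show (0:ℝ) ≤ (K:ℝ)-1 by linarith)]
  have hm0 : 0 < m := by
    rcases lt_trichotomy m 0 with h | h | h
    · exfalso; have : 1/m < 0 := by exact one_div_neg.mpr h
      linarith
    · exfalso; rw [h] at hminv; simp at hminv
    · exact h
  have hd0 : 0 < d := hm0.trans hmd
  have hdm : 1/d < 1/m := one_div_lt_one_div_of_lt hm0 hmd
  have hiden : 1/dstar = 1/s + (1/(K:ℝ))*(1/d - 1/m) := by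
    rw [hdstar, hm]; field_simp; ring
  have h9 : 1/σ2 < 1/dstar := by
    rw [hdstar]
    have hdσ' : 1/((K:ℝ)*σ2) < 1/((K:ℝ)*d) :=
      one_div_lt_one_div_of_lt (by positivity) (by nlinarith)
    have e : ((K:ℝ)-1)/((K:ℝ)*σ2) + 1/((K:ℝ)*σ2) = 1/σ2 := by
      field_simp
      ring
    linarith
  have h10 : 1/dstar < 1/s := by
    rw [hiden]
    have h1 : 1/d - 1/m < 0 := by linarith
    nlinarith [mul_pos (show (0:ℝ) < 1/(K:ℝ) by positivity) (show (0:ℝ) < 1/m - 1/d by linarith)]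
  have hds0 : 0 < dstar := by
    rcases lt_trichotomy dstar 0 with h | h | h
    · exfalso; have : 1/dstar < 0 := one_div_neg.mpr h
      have : 0 < 1/σ2 := by positivity
      linarith
    · exfalso; rw [h] at h9; simp at h9
      have : 0 < 1/σ2 := by positivity
      linarith
    · exact h
  have hds_lt : dstar < σ2 := lt_of_one_div_lt_one_div hσpos h9
  have hs_lt_ds : s < dstar := lt_of_one_div_lt_one_div hds0 h10
  have hsumconst : ∀ c : ℝ, ∑ _k : Fin K, c = (K:ℝ)*c := by
    intro c
    simp [Finset.sum_const, Finset.card_univ, nsmul_eq_mul]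
  have eK : (K:ℝ)*(1/dstar) = (K:ℝ)*(1/s) + (1/d - 1/m) := by
    rw [hiden]; field_simp
  have hfeas : 1/d = 1/m - (K:ℝ)*(1/s - 1/dstar) := by linarith [eK]
  -- notation
  set F : ℝ → ℝ := fun x => (1/2) * Real.log (((a^2*x + v - s)/(x - s)) * (x/(a^2*x + v))) with hF
  have hterm : ∀ x : ℝ, s < x → ceoRateTerm a v s x = ((F x : ℝ) : EReal) := by
    intro x hx
    simp only [ceoRateTerm, if_pos hx, hF]
  have hσinv : 1/σ2 = (1-a^2)/v := by rw [hσ2, one_div_div]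
  have hmemD : ∀ x : ℝ, s < x → x ≤ σ2 → 1/x ∈ Set.Ico ((1-a^2)/v) (1/s) := by
    intro x h1 h2
    have hx0 : 0 < x := hs0.trans h1
    exact ⟨hσinv ▸ one_div_le_one_div_of_le hx0 h2, one_div_lt_one_div_of_lt hs0 h1⟩
  have hq_pos : ∀ x : ℝ, s < x → x ≤ σ2 → 0 < a^2*x + v - s := by
    intro x h1 h2
    nlinarith [mul_nonneg (sq_nonneg a) (show (0:ℝ) ≤ x - s by linarith)]
  have hFg : ∀ x : ℝ, s < x → x ≤ σ2 → F x = gfun a v s (1/x) := by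
    intro x h1 h2
    exact F_eq_gfun hv hs0 h1 (hq_pos x h1 h2)
  have hyst : 1/dstar ∈ Set.Ico ((1-a^2)/v) (1/s) := hmemD dstar hs_lt_ds hds_lt.le
  obtain ⟨hts, hps, hqts⟩ := ico_facts hv hs0 hyst
  have hconv := gfun_convexOn a v s hv hA hs0 hsv
  set c : ℝ := gfun1 a v s (1/dstar) with hc
  have hder : HasDerivAt (gfun a v s) c (1/dstar) :=
    gfun_hasDerivAt (by nlinarith) (by linarith) (by nlinarith)
  have hc0 : 0 ≤ c := gfun1_nonneg hv hs0 hA hyst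
  have htang : ∀ x : ℝ, s < x → x ≤ σ2 →
      F dstar + c * (1/x - 1/dstar) ≤ F x := by
    intro x h1 h2
    rw [hFg x h1 h2, hFg dstar hs_lt_ds hds_lt.le]
    exact tangent_line hconv hyst hder (hmemD x h1 h2)
  -- the value at the constant allocation
  have hKE : (K : EReal) * ceoRateTerm a v s dstar = (((K:ℝ) * F dstar : ℝ) : EReal) := by
    rw [hterm dstar hs_lt_ds, ← EReal.coe_coe_eq_natCast K, ← EReal.coe_mul]
  refine ⟨⟨hs_lt_ds, hds_lt, hiden⟩, ⟨hs_lt_ds.le, hds_lt.le, ?_⟩, ?_, ?_⟩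
  · rw [hsumconst]; linarith [hfeas]
  · -- membership
    refine ⟨fun _ => dstar, fun k => ⟨hs_lt_ds.le, hds_lt.le⟩, ?_, ?_⟩
    · rw [hsumconst]; linarith [hfeas]
    · rw [hKE]
      simp only [hterm dstar hs_lt_ds]
      rw [← coe_sum', hsumconst]
  · -- lower bound
    rintro r ⟨dk, hbk, hcon, rfl⟩
    by_cases hall : ∀ k, s < dk k
    · have hsum : ∑ k, ceoRateTerm a v s (dk k) = ((∑ k, F (dk k) : ℝ) : EReal) := by
        rw [coe_sum']
        exact Finset.sum_congr rfl fun k _ => hterm _ (hall k)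
      rw [hsum, hKE, EReal.coe_le_coe_iff]
      -- real inequality
      have hsum1 : (K:ℝ)*(1/dstar) ≤ ∑ k, 1/(dk k) := by
        have e1 : ∑ k : Fin K, (1/s - 1/(dk k)) = (K:ℝ)*(1/s) - ∑ k, 1/(dk k) := by
          rw [Finset.sum_sub_distrib, hsumconst]
        rw [e1] at hcon
        linarith [eK]
      have hlow : ∀ k : Fin K, F dstar + c*(1/(dk k) - 1/dstar) ≤ F (dk k) :=
        fun k => htang (dk k) (hall k) (hbk k).2
      have h1 : ∑ k : Fin K, (F dstar + c*(1/(dk k) - 1/dstar)) ≤ ∑ k, F (dk k) :=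
        Finset.sum_le_sum (fun k _ => hlow k)
      have h2 : ∑ k : Fin K, (F dstar + c*(1/(dk k) - 1/dstar))
          = (K:ℝ)*F dstar + c*((∑ k, 1/(dk k)) - (K:ℝ)*(1/dstar)) := by
        rw [Finset.sum_add_distrib, hsumconst, ← Finset.mul_sum,
          Finset.sum_sub_distrib, hsumconst]
      have h3 : 0 ≤ c*((∑ k, 1/(dk k)) - (K:ℝ)*(1/dstar)) :=
        mul_nonneg hc0 (by linarith)
      linarith
    · push_neg at hall
      obtain ⟨k₀, hk₀⟩ := hall
      have htop : ceoRateTerm a v s (dk k₀) = ⊤ := by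
        simp only [ceoRateTerm, if_neg (not_lt.mpr hk₀)]
      have hnn : ∀ k : Fin K, (0:EReal) ≤ ceoRateTerm a v s (dk k) := by
        intro k
        unfold ceoRateTerm
        split
        · rename_i h
          have h2 := (hbk k).2
          have hx0 : 0 < dk k := hs0.trans h
          have hqp := hq_pos (dk k) h h2
          have hxv : (dk k)*(1-a^2) ≤ v := by
            rw [hσ2] at h2
            exact (le_div_iff₀ h1A).mp h2
          have harg : 1 ≤ ((a^2*(dk k)+v-s)/((dk k)-s)) * ((dk k)/(a^2*(dk k)+v)) := by
            rw [div_mul_div_comm, le_div_iff₀ (by nlinarith [sq_nonneg a])]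
            nlinarith [mul_nonneg hs0.le (sub_nonneg.2 hxv)]
          have : (0:ℝ) ≤ (1/2) * Real.log (((a^2*(dk k)+v-s)/((dk k)-s)) * ((dk k)/(a^2*(dk k)+v))) :=
            mul_nonneg (by norm_num) (Real.log_nonneg harg)
          exact_mod_cast EReal.coe_nonneg.mpr (by convert this using 3 <;> ring)
        · exact le_top
      have hrest : (0:EReal) ≤ ∑ k ∈ Finset.univ.erase k₀, ceoRateTerm a v s (dk k) :=
        Finset.sum_nonneg fun k _ => hnn k
      have hsum_top : ∑ k, ceoRateTerm a v s (dk k) = ⊤ := by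
        rw [← Finset.add_sum_erase _ _ (Finset.mem_univ k₀), htop]
        exact EReal.top_add_of_ne_bot
          (lt_of_lt_of_le (by simp : (⊥:EReal) < 0) hrest).ne'
      rw [hsum_top]
      exact le_top
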